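/- For every real ℒ > 0, one has ∫₀¹ q_ℒ(x)/√(1−x) dx = e^{−ℒ²/2}, where q_ℒ(x) = (ℒ/√(2πx³))·e^{−ℒ²/(2x)}. (This computes the normalizing constant of the limiting area density for random pairs of pants.) -/

import Mathlib

open Real

/-- The stable-1/2 density with parameter `x`: `q_x(a) = (x/√(2πa³)) e^{−x²/(2a)}`. -/
noncomputable def stableHalfDensity (x a : ℝ) : ℝ :=
  x / Real.sqrt (2 * Real.pi * a ^ 3) * Real.exp (-x ^ 2 / (2 * a))

/-- For every `ℒ > 0`, `∫₀¹ q_ℒ(x)/√(1−x) dx = e^{−ℒ²/2}`. -/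
theorem integral_stableHalf_div_sqrt (L : ℝ) (hL : 0 < L) :
    ∫ x in (0 : ℝ)..1, stableHalfDensity L x / Real.sqrt (1 - x) = Real.exp (-L ^ 2 / 2) := by
  have hπ : 0 < Real.pi := Real.pi_pos
  have h2π : (0:ℝ) < 2 * Real.pi := by positivity
  have h2πs : 0 < Real.sqrt (2 * π) := Real.sqrt_pos.mpr h2π
  set φ : ℝ → ℝ := fun y => L ^ 2 / (L ^ 2 + y ^ 2) with hφ
  set ψ : ℝ → ℝ := fun y => -(2 * L ^ 2 * y) / (L ^ 2 + y ^ 2) ^ 2 with hψ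
  have hs : ∀ y : ℝ, 0 < L ^ 2 + y ^ 2 := fun y => by positivity
  have himg : φ '' Set.Ioi 0 = Set.Ioo 0 1 := by
    ext x
    constructor
    · rintro ⟨y, hy, rfl⟩
      have hy0 : (0:ℝ) < y := hy
      constructor
      · have := hs y; positivity
      · rw [hφ]; dsimp only
        rw [div_lt_one (hs y)]; nlinarith
    · rintro ⟨hx0, hx1⟩
      have h1x : (0:ℝ) < 1 - x := by linarith
      refine ⟨Real.sqrt (L ^ 2 * (1 - x) / x), Real.sqrt_pos.mpr (by positivity), ?_⟩
      have hsq : Real.sqrt (L ^ 2 * (1 - x) / x) ^ 2 = L ^ 2 * (1 - x) / x :=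
        Real.sq_sqrt (by positivity)
      rw [hφ]; dsimp only
      rw [hsq]
      field_simp
      ring
  have hderiv : ∀ y ∈ Set.Ioi (0:ℝ), HasDerivWithinAt φ (ψ y) (Set.Ioi 0) y := by
    intro y hy
    have h1 : HasDerivAt (fun y : ℝ => L ^ 2 + y ^ 2) (2 * y) y := by
      simpa using (hasDerivAt_pow 2 y).const_add (L ^ 2)
    have h2 := (hasDerivAt_const y (L ^ 2)).div h1 (hs y).ne'
    have h3 : HasDerivAt φ (ψ y) y := by
      have h2' : HasDerivAt (fun y : ℝ => L ^ 2 / (L ^ 2 + y ^ 2))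
          ((0 * (L ^ 2 + y ^ 2) - L ^ 2 * (2 * y)) / (L ^ 2 + y ^ 2) ^ 2) y := h2
      convert h2' using 1
      rw [hψ]; ring
    exact h3.hasDerivWithinAt
  have hinj : Set.InjOn φ (Set.Ioi 0) := by
    intro a ha b hb hab
    have ha' : (0:ℝ) < a := ha
    have hb' : (0:ℝ) < b := hb
    rw [hφ] at hab; dsimp only at hab
    rw [div_eq_div_iff (hs a).ne' (hs b).ne'] at hab
    have h0 : L ^ 2 * (a ^ 2) = L ^ 2 * (b ^ 2) := by linarith
    have hab2 : a ^ 2 = b ^ 2 := mul_left_cancel₀ (by positivity) h0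
    calc a = Real.sqrt (a ^ 2) := (Real.sqrt_sq ha'.le).symm
      _ = Real.sqrt (b ^ 2) := by rw [hab2]
      _ = b := Real.sqrt_sq hb'.le
  rw [intervalIntegral.integral_of_le zero_le_one, MeasureTheory.integral_Ioc_eq_integral_Ioo,
    ← himg,
    MeasureTheory.integral_image_eq_integral_abs_deriv_smul measurableSet_Ioi hderiv hinj]
  have hcongr : ∀ y ∈ Set.Ioi (0:ℝ),
      |ψ y| • (stableHalfDensity L (φ y) / Real.sqrt (1 - φ y)) =
      2 / Real.sqrt (2 * π) * Real.exp (-L ^ 2 / 2) * Real.exp (-(1/2) * y ^ 2) := by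
    intro y hy
    have hy0 : (0:ℝ) < y := hy
    have hs' : 0 < L ^ 2 + y ^ 2 := hs y
    have hss : Real.sqrt (L ^ 2 + y ^ 2) ^ 2 = L ^ 2 + y ^ 2 := Real.sq_sqrt hs'.le
    have hsp : 0 < Real.sqrt (L ^ 2 + y ^ 2) := Real.sqrt_pos.mpr hs'
    have hLs : L ^ 2 / (L ^ 2 + y ^ 2) = (L / Real.sqrt (L ^ 2 + y ^ 2)) ^ 2 := by
      rw [div_pow, hss]
    have h1 : Real.sqrt (2 * π * (L ^ 2 / (L ^ 2 + y ^ 2)) ^ 3)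
        = Real.sqrt (2 * π) * L ^ 3 / Real.sqrt (L ^ 2 + y ^ 2) ^ 3 := by
      calc Real.sqrt (2 * π * (L ^ 2 / (L ^ 2 + y ^ 2)) ^ 3)
          = Real.sqrt (2 * π) * Real.sqrt ((L ^ 2 / (L ^ 2 + y ^ 2)) ^ 3) :=
            Real.sqrt_mul h2π.le _
        _ = Real.sqrt (2 * π) * ((L / Real.sqrt (L ^ 2 + y ^ 2)) ^ 3) := by
            rw [hLs, ← pow_mul, mul_comm 2 3, pow_mul]
            exact congrArg _ (Real.sqrt_sq (by positivity))
        _ = Real.sqrt (2 * π) * L ^ 3 / Real.sqrt (L ^ 2 + y ^ 2) ^ 3 := by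
            rw [div_pow]; ring
    have h2 : Real.sqrt (1 - L ^ 2 / (L ^ 2 + y ^ 2)) = y / Real.sqrt (L ^ 2 + y ^ 2) := by
      rw [show 1 - L ^ 2 / (L ^ 2 + y ^ 2) = (y / Real.sqrt (L ^ 2 + y ^ 2)) ^ 2 by
        rw [div_pow, hss]; field_simp; ring]
      exact Real.sqrt_sq (by positivity)
    have h3 : -L ^ 2 / (2 * (L ^ 2 / (L ^ 2 + y ^ 2))) = -(L ^ 2 + y ^ 2) / 2 := by
      field_simp
    have hexp : Real.exp (-L ^ 2 / 2) * Real.exp (-(1/2) * y ^ 2)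
        = Real.exp (-(L ^ 2 + y ^ 2) / 2) := by
      rw [← Real.exp_add]; ring_nf
    have key : 2 * L ^ 2 * y / (L ^ 2 + y ^ 2) ^ 2 *
        (L / (Real.sqrt (2 * π) * L ^ 3 / Real.sqrt (L ^ 2 + y ^ 2) ^ 3) *
          Real.exp (-(L ^ 2 + y ^ 2) / 2) / (y / Real.sqrt (L ^ 2 + y ^ 2))) =
        2 / Real.sqrt (2 * π) * Real.exp (-(L ^ 2 + y ^ 2) / 2) := by
      have h4 : Real.sqrt (L ^ 2 + y ^ 2) ^ 4 = (L ^ 2 + y ^ 2) ^ 2 := by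
        rw [show (4:ℕ) = 2 * 2 from rfl, pow_mul, hss]
      field_simp
      ring_nf
      rw [h4]
      ring
    rw [smul_eq_mul, stableHalfDensity, hφ, hψ]; dsimp only
    rw [h1, h2, h3,
      abs_div, abs_neg, abs_of_nonneg (by positivity : (0:ℝ) ≤ 2 * L ^ 2 * y),
      abs_of_nonneg (by positivity : (0:ℝ) ≤ (L ^ 2 + y ^ 2) ^ 2)]
    linear_combination key - (2 / Real.sqrt (2 * π)) * hexp
  rw [MeasureTheory.setIntegral_congr_fun measurableSet_Ioi hcongr,
    MeasureTheory.integral_const_mul, integral_gaussian_Ioi,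
    show π / (1/2 : ℝ) = 2 * π by ring]
  field_simp
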